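/- In a regular monoidal category, tensor-independence of subobjects of an injective object implies independence: suppose f_A : A → Q and f_B : B → Q are monomorphisms, Q is injective (every morphism from a subobject into Q along a monomorphism into Q extends to an endomorphism of Q, in the sense that for every monomorphism m : X → Q and every morphism n : X → Q there exists j : Q → Q with m ≫ j = n), and there exist monomorphisms u, v : A ⊗ B → Q with i_A ≫ u = f_A, i_B ≫ u = f_B, i_A ≫ v = f_A, i_B ≫ v = f_B. Then for all endomorphisms α_A : A → A, α_B : B → B there exists j : Q → Q with f_A ≫ j = α_A ≫ f_A and f_B ≫ j = α_B ≫ f_B. -/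

import Mathlib

open CategoryTheory MonoidalCategory

/-- In a regular monoidal category, tensor-independence of subobjects of an
injective object implies independence. -/
theorem stmt_10 {𝒞 : Type*} [Category 𝒞] [MonoidalCategory 𝒞]
    (i : ∀ A B : 𝒞, A ⟶ A ⊗ B) (i' : ∀ A B : 𝒞, B ⟶ A ⊗ B)
    (hmono : ∀ A B : 𝒞, Mono (i A B) ∧ Mono (i' A B))
    (hnat : ∀ {A A' B B' : 𝒞} (mA : A ⟶ A') (mB : B ⟶ B'),
      i A B ≫ (mA ⊗ₘ mB) = mA ≫ i A' B' ∧ i' A B ≫ (mA ⊗ₘ mB) = mB ≫ i' A' B')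
    {A B Q : 𝒞} (fA : A ⟶ Q) (fB : B ⟶ Q) [Mono fA] [Mono fB]
    (hinj : ∀ {X : 𝒞} (m : X ⟶ Q), Mono m → ∀ n : X ⟶ Q, ∃ j : Q ⟶ Q, m ≫ j = n)
    (u v : A ⊗ B ⟶ Q) (hu : Mono u) (hv : Mono v)
    (huA : i A B ≫ u = fA) (huB : i' A B ≫ u = fB)
    (hvA : i A B ≫ v = fA) (hvB : i' A B ≫ v = fB)
    (αA : A ⟶ A) (αB : B ⟶ B) :
    ∃ j : Q ⟶ Q, fA ≫ j = αA ≫ fA ∧ fB ≫ j = αB ≫ fB := by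
  obtain ⟨j, hj⟩ := hinj u hu ((αA ⊗ₘ αB) ≫ v)
  refine ⟨j, ?_, ?_⟩
  · rw [← huA, Category.assoc, hj, ← Category.assoc, (hnat αA αB).1,
      Category.assoc, hvA, huA]
  · rw [← huB, Category.assoc, hj, ← Category.assoc, (hnat αA αB).2,
      Category.assoc, hvB, huB]
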